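/- For any two closed line segments s₁ = [a₁,b₁] and s₂ = [a₂,b₂] in ℝ², the Hausdorff distance d_H(s₁,s₂) equals the maximum of the four values δ(a₁,s₂), δ(b₁,s₂), δ(a₂,s₁), δ(b₂,s₁), where δ(p,s) denotes the minimum Euclidean distance from the point p to the segment s. -/

import Mathlib

noncomputable abbrev E2 : Type := EuclideanSpace ℝ (Fin 2)

lemma dist_combo_le (a b p q : E2) {u v : ℝ} (hu : 0 ≤ u) (hv : 0 ≤ v) :
    dist (u • a + v • b) (u • p + v • q) ≤ u * dist a p + v * dist b q := by
  simp only [dist_eq_norm]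
  have h : u • a + v • b - (u • p + v • q) = u • (a - p) + v • (b - q) := by
    simp [smul_sub]; abel
  rw [h]
  calc ‖u • (a - p) + v • (b - q)‖ ≤ ‖u • (a - p)‖ + ‖v • (b - q)‖ := norm_add_le _ _
    _ = u * ‖a - p‖ + v * ‖b - q‖ := by
        rw [norm_smul, norm_smul, Real.norm_eq_abs, Real.norm_eq_abs,
          abs_of_nonneg hu, abs_of_nonneg hv]


lemma isCompact_seg (a b : E2) : IsCompact (segment ℝ a b) := by
  rw [segment_eq_image_lineMap]
  exact isCompact_Icc.image AffineMap.lineMap_continuous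

lemma infDist_le_max_of_mem_segment {a b a' b' x : E2} (hx : x ∈ segment ℝ a b) :
    Metric.infDist x (segment ℝ a' b') ≤
      max (Metric.infDist a (segment ℝ a' b')) (Metric.infDist b (segment ℝ a' b')) := by
  obtain ⟨u, v, hu, hv, huv, rfl⟩ := hx
  have hne : (segment ℝ a' b').Nonempty := ⟨a', left_mem_segment ℝ a' b'⟩
  have hc : IsCompact (segment ℝ a' b') := isCompact_seg a' b'
  obtain ⟨p, hp, hpd⟩ := hc.exists_infDist_eq_dist hne a
  obtain ⟨q, hq, hqd⟩ := hc.exists_infDist_eq_dist hne b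
  have hz : u • p + v • q ∈ segment ℝ a' b' := (convex_segment a' b') hp hq hu hv huv
  set M := max (Metric.infDist a (segment ℝ a' b')) (Metric.infDist b (segment ℝ a' b'))
  calc Metric.infDist (u • a + v • b) (segment ℝ a' b')
      ≤ dist (u • a + v • b) (u • p + v • q) := Metric.infDist_le_dist_of_mem hz
    _ ≤ u * dist a p + v * dist b q := dist_combo_le a b p q hu hv
    _ ≤ u * M + v * M := by
        gcongr
        · rw [← hpd]; exact le_max_left _ _
        · rw [← hqd]; exact le_max_right _ _
    _ = M := by rw [← add_mul, huv, one_mul]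

/-- For segments s₁ = [a₁,b₁], s₂ = [a₂,b₂] in ℝ², the Hausdorff distance equals the
maximum of the four endpoint-to-segment distances. -/
theorem hausdorff_dist_segments_eq_max (a₁ b₁ a₂ b₂ : E2) :
    Metric.hausdorffDist (segment ℝ a₁ b₁) (segment ℝ a₂ b₂) =
      max (max (Metric.infDist a₁ (segment ℝ a₂ b₂)) (Metric.infDist b₁ (segment ℝ a₂ b₂)))
          (max (Metric.infDist a₂ (segment ℝ a₁ b₁)) (Metric.infDist b₂ (segment ℝ a₁ b₁))) := by
  have h1ne : (segment ℝ a₁ b₁).Nonempty := ⟨a₁, left_mem_segment ℝ a₁ b₁⟩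
  have h2ne : (segment ℝ a₂ b₂).Nonempty := ⟨a₂, left_mem_segment ℝ a₂ b₂⟩
  have h1b : Bornology.IsBounded (segment ℝ a₁ b₁) := (isCompact_seg a₁ b₁).isBounded
  have h2b : Bornology.IsBounded (segment ℝ a₂ b₂) := (isCompact_seg a₂ b₂).isBounded
  have hfin : EMetric.hausdorffEdist (segment ℝ a₁ b₁) (segment ℝ a₂ b₂) ≠ ⊤ :=
    Metric.hausdorffEdist_ne_top_of_nonempty_of_bounded h1ne h2ne h1b h2b
  have hfin' : EMetric.hausdorffEdist (segment ℝ a₂ b₂) (segment ℝ a₁ b₁) ≠ ⊤ := by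
    unfold EMetric.hausdorffEdist at hfin ⊢
    rwa [EMetric.hausdorffEdist_comm]
  apply le_antisymm
  · apply Metric.hausdorffDist_le_of_infDist
    · exact le_max_of_le_left (le_max_of_le_left Metric.infDist_nonneg)
    · intro x hx
      exact (infDist_le_max_of_mem_segment hx).trans (le_max_left _ _)
    · intro x hx
      exact (infDist_le_max_of_mem_segment hx).trans (le_max_right _ _)
  · have sym : Metric.hausdorffDist (segment ℝ a₂ b₂) (segment ℝ a₁ b₁) =
        Metric.hausdorffDist (segment ℝ a₁ b₁) (segment ℝ a₂ b₂) :=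
      Metric.hausdorffDist_comm
    refine max_le (max_le ?_ ?_) (max_le ?_ ?_)
    · exact Metric.infDist_le_hausdorffDist_of_mem (left_mem_segment ℝ a₁ b₁) hfin
    · exact Metric.infDist_le_hausdorffDist_of_mem (right_mem_segment ℝ a₁ b₁) hfin
    · rw [← sym]
      exact Metric.infDist_le_hausdorffDist_of_mem (left_mem_segment ℝ a₂ b₂) hfin'
    · rw [← sym]
      exact Metric.infDist_le_hausdorffDist_of_mem (right_mem_segment ℝ a₂ b₂) hfin'
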